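/- Uniform sample neighborhood count lemma. Let X_1,…,X_m be independent random variables, each uniformly distributed on [0,1). Fix constants C, C1 > 0 and set Δ = [C + (C1+4)^{1/2}] (m^{−1} log m)^{1/2}. Let I_1,…,I_R be a partition of [0,1) into intervals each of length at least 2Δ, and write I(X_i) for the partition interval containing X_i. Then, for all sufficiently large m (depending only on C and C1), with probability at least 1 − 2 m^{−C1/4}: for every i ∈ {1,…,m}, #{ i' : X_{i'} ∈ [X_i − Δ, X_i + Δ] ∩ I(X_i) } ≥ C (m log m)^{1/2}. -/

import Mathlib

/-- A partition of `[0,1)` into `R` consecutive intervals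
`I_r = [cut r, cut (r+1))`, determined by strictly increasing cut points
`0 = cut 0 < cut 1 < ⋯ < cut R = 1`. -/
structure IntervalPartition (R : ℕ) where
  cut : Fin (R + 1) → ℝ
  mono : StrictMono cut
  first : cut 0 = 0
  last : cut (Fin.last R) = 1

/-- The `r`-th interval `I_r = [cut r, cut (r+1))` of the partition. -/
def IntervalPartition.cell {R : ℕ} (p : IntervalPartition R) (r : Fin R) : Set ℝ :=
  Set.Ico (p.cut r.castSucc) (p.cut r.succ)

/-- The length of the `r`-th interval of the partition. -/
def IntervalPartition.len {R : ℕ} (p : IntervalPartition R) (r : Fin R) : ℝ :=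
  p.cut r.succ - p.cut r.castSucc

/-- `x` and `y` lie in the same interval of the partition. -/
def IntervalPartition.sameCell {R : ℕ} (p : IntervalPartition R) (x y : ℝ) : Prop :=
  ∃ r : Fin R, x ∈ p.cell r ∧ y ∈ p.cell r

/-- **Assumption 1** (piecewise Lipschitz graphon): on every cell `I_r × I_s × J_t`,
`f` is `Ln`-Lipschitz in each of its first two arguments and `LK`-Lipschitz in its
third argument. -/
def PiecewiseLipschitz {R T : ℕ} (f : ℝ → ℝ → ℝ → ℝ) (Ln LK : ℝ)
    (pI : IntervalPartition R) (pJ : IntervalPartition T) : Prop :=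
  ∀ (r s : Fin R) (t : Fin T),
    (∀ u u' v w, u ∈ pI.cell r → u' ∈ pI.cell r → v ∈ pI.cell s → w ∈ pJ.cell t →
      |f u v w - f u' v w| ≤ Ln * |u - u'|) ∧
    (∀ u v v' w, u ∈ pI.cell r → v ∈ pI.cell s → v' ∈ pI.cell s → w ∈ pJ.cell t →
      |f u v w - f u v' w| ≤ Ln * |v - v'|) ∧
    (∀ u v w w', u ∈ pI.cell r → v ∈ pI.cell s → w ∈ pJ.cell t → w' ∈ pJ.cell t →
      |f u v w - f u v w'| ≤ LK * |w - w'|)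

open MeasureTheory ProbabilityTheory

/-- The neighborhood radius `Δ = [C + (C1+4)^{1/2}] (m⁻¹ log m)^{1/2}`. -/
noncomputable def nbhdRadius (C C1 : ℝ) (m : ℕ) : ℝ :=
  (C + Real.sqrt (C1 + 4)) * Real.sqrt (Real.log m / m)

open MeasureTheory ProbabilityTheory

lemma exp_neg_le_quadratic {x : ℝ} (hx : 0 ≤ x) :
    Real.exp (-x) ≤ 1 - x + x ^ 2 / 2 := by
  have hsum := Real.sum_le_exp_of_nonneg hx 3
  simp [Finset.sum_range_succ] at hsum
  have hq : (0:ℝ) ≤ 1 - x + x ^ 2 / 2 := by nlinarith [sq_nonneg (x - 1)]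
  rw [Real.exp_neg, inv_le_iff_one_le_mul₀ (Real.exp_pos x)]
  nlinarith [mul_le_mul_of_nonneg_left hsum hq, sq_nonneg (x ^ 2)]

lemma IntervalPartition.cell_subset {R : ℕ} (p : IntervalPartition R) (r : Fin R) :
    p.cell r ⊆ Set.Ico (0:ℝ) 1 := by
  intro x hx
  obtain ⟨h1, h2⟩ := hx
  constructor
  · calc (0:ℝ) = p.cut 0 := p.first.symm
    _ ≤ p.cut r.castSucc := p.mono.monotone (Fin.zero_le _)
    _ ≤ x := h1
  · calc x < p.cut r.succ := h2
    _ ≤ p.cut (Fin.last R) := p.mono.monotone (Fin.le_last _)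
    _ = 1 := p.last

lemma IntervalPartition.exists_cell {R : ℕ} (p : IntervalPartition R) {x : ℝ}
    (hx : x ∈ Set.Ico (0:ℝ) 1) : ∃ r : Fin R, x ∈ p.cell r := by
  classical
  have h0 : p.cut 0 ≤ x := by rw [p.first]; exact hx.1
  let F : Finset (Fin (R+1)) := Finset.univ.filter (fun j => p.cut j ≤ x)
  have hF : (0 : Fin (R+1)) ∈ F := by simp [F, h0]
  have hne : F.Nonempty := ⟨0, hF⟩
  set j := F.max' hne with hj
  have hjle : p.cut j ≤ x := by
    have := F.max'_mem hne
    simpa [F] using this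
  have hjlast : j ≠ Fin.last R := by
    intro h
    rw [h, p.last] at hjle
    exact absurd hx.2 (not_lt.mpr hjle)
  have hjlt : (j : ℕ) < R := Fin.lt_last_iff_ne_last.mpr hjlast
  refine ⟨⟨(j : ℕ), hjlt⟩, hjle, ?_⟩
  · by_contra h
    push_neg at h
    have hmem : (⟨(j:ℕ), hjlt⟩ : Fin R).succ ∈ F := by
      simp only [F, Finset.mem_filter, Finset.mem_univ, true_and]
      exact h
    have hle := F.le_max' _ hmem
    rw [← hj] at hle
    have : (j : ℕ) + 1 ≤ (j : ℕ) := hle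
    omega

lemma IntervalPartition.sum_len {R : ℕ} (p : IntervalPartition R) :
    ∑ r : Fin R, p.len r = 1 := by
  set f : ℕ → ℝ := fun i => p.cut ⟨min i R, by omega⟩ with hf
  calc ∑ r : Fin R, p.len r = ∑ i ∈ Finset.range R, (f (i+1) - f i) := by
        rw [← Fin.sum_univ_eq_sum_range]
        refine Finset.sum_congr rfl (fun r _ => ?_)
        have h1 : (⟨min ((r:ℕ)+1) R, by omega⟩ : Fin (R+1)) = r.succ := by
          apply Fin.ext; simp; try omega
        have h2 : (⟨min (r:ℕ) R, by omega⟩ : Fin (R+1)) = r.castSucc := by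
          apply Fin.ext; simp; try omega
        simp only [IntervalPartition.len, hf, h1, h2]
    _ = f R - f 0 := Finset.sum_range_sub f R
    _ = 1 := by
        have h1 : (⟨min R R, by omega⟩ : Fin (R+1)) = Fin.last R := by
          apply Fin.ext; simp; try omega
        have h2 : (⟨min 0 R, by omega⟩ : Fin (R+1)) = 0 := by
          apply Fin.ext; simp; try omega
        simp only [hf, h1, h2, p.first, p.last, sub_zero]

lemma bernoulli_lower_tail {Ω : Type} [MeasurableSpace Ω] (μ : Measure Ω)
    [IsProbabilityMeasure μ] {m : ℕ} (X : Fin m → Ω → ℝ)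
    (hXm : ∀ i, Measurable (X i))
    (hInd : iIndepFun X μ)
    (J : Set ℝ) (hJ : MeasurableSet J) (p : ℝ)
    (hp : ∀ i, (μ (X i ⁻¹' J)).toReal = p) (hp0 : 0 ≤ p) (hp1 : p ≤ 1)
    (τ ε : ℝ) (hτ : 0 ≤ τ) :
    (μ {ω | (∑ i, Set.indicator J 1 (X i ω)) ≤ ε}).toReal ≤
      Real.exp (τ * ε - τ * ((m:ℝ) * p) + (m:ℝ) * τ ^ 2 / 2) := by
  classical
  set t : ℝ := -τ with ht_def
  have ht : t ≤ 0 := neg_nonpos.mpr hτ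
  set Y : Fin m → Ω → ℝ := fun i ω => Set.indicator J 1 (X i ω) with hY
  have hg : Measurable (Set.indicator J (1 : ℝ → ℝ)) := measurable_one.indicator hJ
  have hYm : ∀ i, Measurable (Y i) := fun i => hg.comp (hXm i)
  have hYInd : iIndepFun Y μ :=
    hInd.comp (fun _ => Set.indicator J 1) (fun _ => hg)
  have hexp : ∀ i ω, Real.exp (t * Y i ω) =
      1 + (Real.exp t - 1) * Set.indicator (X i ⁻¹' J) 1 ω := by
    intro i ω
    simp only [hY, Set.indicator_apply, Set.mem_preimage]
    split_ifs with h
    · simp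
    · simp
  have hI : ∀ i, Integrable (fun ω => (Real.exp t - 1) * Set.indicator (X i ⁻¹' J) 1 ω) μ :=
    fun i => ((integrable_const (1:ℝ)).indicator ((hXm i) hJ)).const_mul _
  have hint : ∀ i, Integrable (fun ω => Real.exp (t * Y i ω)) μ := by
    intro i
    simp only [hexp]
    exact (integrable_const 1).add (hI i)
  have hmgf : ∀ i, mgf (Y i) μ t = 1 + (Real.exp t - 1) * p := by
    intro i
    rw [mgf]
    simp only [hexp]
    rw [integral_add (integrable_const 1) (hI i), integral_const, MeasureTheory.integral_const_mul]
    have : ∫ ω, Set.indicator (X i ⁻¹' J) 1 ω ∂μ = (μ (X i ⁻¹' J)).toReal :=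
      integral_indicator_one ((hXm i) hJ)
    rw [this, hp i]
    simp [measure_univ]
  have hfac : 1 + (Real.exp t - 1) * p ≤ Real.exp (-τ * p + τ ^ 2 / 2) := by
    have h1 : Real.exp t - 1 ≤ -τ + τ ^ 2 / 2 := by
      have := exp_neg_le_quadratic hτ
      rw [← ht_def] at this
      linarith
    have h2 : (Real.exp t - 1) * p ≤ (-τ + τ ^ 2 / 2) * p :=
      mul_le_mul_of_nonneg_right h1 hp0
    have h3 : (-τ + τ ^ 2 / 2) * p ≤ -τ * p + τ ^ 2 / 2 := by
      have : τ ^ 2 / 2 * p ≤ τ ^ 2 / 2 * 1 :=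
        mul_le_mul_of_nonneg_left hp1 (by positivity)
      nlinarith
    calc 1 + (Real.exp t - 1) * p ≤ 1 + (-τ * p + τ ^ 2 / 2) := by linarith
    _ ≤ Real.exp (-τ * p + τ ^ 2 / 2) := by
          have := Real.add_one_le_exp (-τ * p + τ ^ 2 / 2)
          linarith
  have hfac0 : 0 ≤ 1 + (Real.exp t - 1) * p := by
    have h := Real.exp_pos t
    nlinarith
  have hS : Integrable (fun ω => Real.exp (t * (∑ i, Y i) ω)) μ :=
    hYInd.integrable_exp_mul_sum hYm (fun i _ => hint i)
  have hch := measure_le_le_exp_mul_mgf (μ := μ) (X := ∑ i, Y i) ε ht hS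
  have hmgfS : mgf (∑ i, Y i) μ t ≤ Real.exp ((m:ℝ) * (-τ * p + τ ^ 2 / 2)) := by
    rw [hYInd.mgf_sum hYm Finset.univ]
    calc ∏ i, mgf (Y i) μ t = (1 + (Real.exp t - 1) * p) ^ m := by
          simp [hmgf, Finset.prod_const, Finset.card_univ]
    _ ≤ Real.exp (-τ * p + τ ^ 2 / 2) ^ m := pow_le_pow_left₀ hfac0 hfac m
    _ = Real.exp ((m:ℝ) * (-τ * p + τ ^ 2 / 2)) := (Real.exp_nat_mul _ m).symm
  have hev : {ω | (∑ i, Set.indicator J 1 (X i ω)) ≤ ε} = {ω | (∑ i, Y i) ω ≤ ε} := by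
    ext ω; simp [hY, Finset.sum_apply]
  rw [hev]
  calc (μ {ω | (∑ i, Y i) ω ≤ ε}).toReal ≤ Real.exp (-t * ε) * mgf (∑ i, Y i) μ t := hch
  _ ≤ Real.exp (-t * ε) * Real.exp ((m:ℝ) * (-τ * p + τ ^ 2 / 2)) :=
      mul_le_mul_of_nonneg_left hmgfS (Real.exp_pos _).le
  _ = Real.exp (τ * ε - τ * ((m:ℝ) * p) + (m:ℝ) * τ ^ 2 / 2) := by
      rw [← Real.exp_add]; congr 1; rw [ht_def]; ring

lemma sum_indicator_eq_ncard {m : ℕ} (J : Set ℝ) (g : Fin m → ℝ) :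
    (∑ i, Set.indicator J 1 (g i)) = (Set.ncard {i | g i ∈ J} : ℝ) := by
  classical
  have h : ∀ i, Set.indicator J (1 : ℝ → ℝ) (g i) = if g i ∈ J then (1:ℝ) else 0 := by
    intro i; simp [Set.indicator_apply]
  simp_rw [h]
  rw [Finset.sum_boole]
  congr 1
  rw [Set.ncard_eq_toFinset_card']
  congr 1
  simp [Set.toFinset_setOf]

lemma net_cover {Δ a b x : ℝ} {m : ℕ} (hm : 3 ≤ m)
    (hΔ0 : 0 < Δ) (hΔlb : 2 / Real.sqrt m ≤ Δ)
    (ha0 : 0 ≤ a) (hb1 : b ≤ 1) (hgap : a + 2*Δ ≤ b)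
    (hx1 : a ≤ x) (hx2 : x < b) :
    ∃ k : Fin m, max a (min (a + (k:ℕ) * (Δ/2)) (b - Δ)) ≤ x ∧
      x < max a (min (a + (k:ℕ) * (Δ/2)) (b - Δ)) + Δ := by
  have hm0 : (0:ℝ) < m := by positivity
  have hm3 : (3:ℝ) ≤ m := by exact_mod_cast hm
  set s : ℝ := Real.sqrt m with hs
  have hs0 : 0 < s := Real.sqrt_pos.mpr hm0
  have hs2 : s ^ 2 = m := Real.sq_sqrt hm0.le
  have hslt : s + 1 ≤ (m:ℝ) := by nlinarith
  have h2s : 2 / s ≤ Δ := hΔlb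
  have h2s' : (2:ℝ) ≤ Δ * s := (div_le_iff₀ hs0).mp h2s
  have h1s : 1/s ≤ Δ/2 := by
    rw [div_le_div_iff₀ hs0 (by norm_num : (0:ℝ) < 2)]
    linarith
  by_cases hcase : b - Δ ≤ x
  · refine ⟨⟨m - 1, by omega⟩, ?_, ?_⟩
    all_goals {
      have hk : ((⟨m - 1, by omega⟩ : Fin m) : ℕ) = m - 1 := rfl
      have hkc : (((m - 1 : ℕ)) : ℝ) = (m:ℝ) - 1 := by
        rw [Nat.cast_sub (by omega)]; norm_num
      have hone : (1:ℝ) ≤ ((m:ℝ) - 1) * (Δ/2) := by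
        have h2 : ((m:ℝ) - 1) * (1/s) ≤ ((m:ℝ) - 1) * (Δ/2) :=
          mul_le_mul_of_nonneg_left h1s (by linarith)
        have h3 : (1:ℝ) ≤ ((m:ℝ) - 1) * (1/s) := by
          rw [mul_one_div, le_div_iff₀ hs0, one_mul]
          linarith
        linarith
      have hbig : b - Δ ≤ a + ((m - 1 : ℕ) : ℝ) * (Δ/2) := by
        rw [hkc]; linarith
      have hmin : min (a + ((⟨m - 1, by omega⟩ : Fin m):ℕ) * (Δ/2)) (b - Δ) = b - Δ := by
        rw [hk]; exact min_eq_right hbig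
      have hmax : max a (b - Δ) = b - Δ := max_eq_right (by linarith)
      rw [hmin, hmax]
      first
      | exact hcase
      | linarith
    }
  · push_neg at hcase
    set k0 : ℕ := ⌊(x - a) / (Δ/2)⌋₊ with hk0
    have hΔ2 : 0 < Δ/2 := by linarith
    have hxa : 0 ≤ x - a := by linarith
    have hfl : (k0:ℝ) * (Δ/2) ≤ x - a := by
      have h := Nat.floor_le (div_nonneg hxa hΔ2.le)
      calc (k0:ℝ) * (Δ/2) ≤ ((x - a)/(Δ/2)) * (Δ/2) :=
            mul_le_mul_of_nonneg_right h hΔ2.le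
      _ = x - a := div_mul_cancel₀ _ hΔ2.ne'
    have hfl2 : x - a < ((k0:ℝ) + 1) * (Δ/2) := by
      have h := Nat.lt_floor_add_one ((x - a)/(Δ/2))
      calc x - a = ((x - a)/(Δ/2)) * (Δ/2) := (div_mul_cancel₀ _ hΔ2.ne').symm
      _ < ((k0:ℝ) + 1) * (Δ/2) := by
            apply mul_lt_mul_of_pos_right _ hΔ2
            exact_mod_cast h
    have hk0m : k0 < m := by
      have hxa1 : x - a ≤ 1 := by linarith
      have h1 : (k0:ℝ) * (1/s) ≤ 1 := by
        have h2 : (k0:ℝ) * (1/s) ≤ (k0:ℝ) * (Δ/2) :=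
          mul_le_mul_of_nonneg_left h1s (Nat.cast_nonneg k0)
        linarith
      have h2 : (k0:ℝ) ≤ s := by
        rw [mul_one_div, div_le_one hs0] at h1; exact h1
      have h3 : (k0:ℝ) < (m:ℝ) := by linarith
      exact_mod_cast h3
    refine ⟨⟨k0, hk0m⟩, ?_, ?_⟩
    all_goals {
      have hk : ((⟨k0, hk0m⟩ : Fin m) : ℕ) = k0 := rfl
      have hsle : a + (k0:ℝ) * (Δ/2) ≤ x := by linarith
      have hshi : a + (k0:ℝ) * (Δ/2) ≤ b - Δ := by linarith
      have hslo : a ≤ a + (k0:ℝ) * (Δ/2) :=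
        le_add_of_nonneg_right (by positivity)
      have hmin : min (a + ((⟨k0, hk0m⟩ : Fin m):ℕ) * (Δ/2)) (b - Δ)
          = a + (k0:ℝ) * (Δ/2) := by
        rw [hk]; exact min_eq_left hshi
      rw [hmin, max_eq_right hslo]
      first
      | exact hsle
      | linarith
    }


set_option maxHeartbeats 1600000 in
/-- **Uniform sample neighborhood count lemma.**
Let `X 1, …, X m` be i.i.d. uniform on `[0,1)`, `Δ = [C + (C1+4)^{1/2}](m⁻¹ log m)^{1/2}`,
and let the partition intervals all have length at least `2Δ`. Then for all sufficiently
large `m`, with probability at least `1 − 2 m^{−C1/4}`, for every `i` the number of points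
`X i'` lying in `[X i − Δ, X i + Δ] ∩ I(X i)` is at least `C (m log m)^{1/2}`. -/
theorem uniform_sample_neighborhood_count (C C1 : ℝ) (hC : 0 < C) (hC1 : 0 < C1) :
    ∃ M0 : ℕ, ∀ m : ℕ, M0 ≤ m →
    ∀ {Ω : Type} [MeasurableSpace Ω] (μ : Measure Ω) [IsProbabilityMeasure μ]
      (X : Fin m → Ω → ℝ),
      (∀ i, Measurable (X i)) →
      (∀ i, Measure.map (X i) μ = volume.restrict (Set.Ico (0 : ℝ) 1)) →
      iIndepFun X μ →
    ∀ (R : ℕ) (pI : IntervalPartition R),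
      (∀ r : Fin R, 2 * nbhdRadius C C1 m ≤ pI.len r) →
    ENNReal.ofReal (1 - 2 * (m : ℝ) ^ (-(C1 / 4))) ≤
      μ {ω | ∀ i : Fin m,
        C * Real.sqrt (m * Real.log m) ≤
          (Set.ncard {i' : Fin m |
            X i' ω ∈ Set.Icc (X i ω - nbhdRadius C C1 m) (X i ω + nbhdRadius C C1 m) ∧
            pI.sameCell (X i ω) (X i' ω)} : ℝ)} := by
  
  classical
  refine ⟨3, fun m hm Ω _ μ _ X hXm hXmap hInd R p hlen => ?_⟩
  -- basic facts about m
  have hm0 : (0:ℝ) < m := by positivity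
  have hm1 : (1:ℝ) ≤ m := by exact_mod_cast Nat.one_le_of_lt hm
  have hm3 : (3:ℝ) ≤ m := by exact_mod_cast hm
  set L : ℝ := Real.log m with hLdef
  have hL1 : 1 ≤ L := by
    rw [hLdef, Real.le_log_iff_exp_le hm0]
    have h9 := Real.exp_one_lt_d9
    linarith
  have hL0 : 0 < L := lt_of_lt_of_le one_pos hL1
  set s : ℝ := Real.sqrt m with hsdef
  have hs0 : 0 < s := Real.sqrt_pos.mpr hm0
  have hs2 : s ^ 2 = m := Real.sq_sqrt hm0.le
  have hsm : s ≤ (m:ℝ) := by nlinarith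
  -- constants
  set b : ℝ := Real.sqrt (C1 + 4) with hbdef
  have hb0 : 0 < b := Real.sqrt_pos.mpr (by linarith)
  have hb2 : (2:ℝ) ≤ b := by
    rw [hbdef, show (2:ℝ) = Real.sqrt 4 by
      rw [show (4:ℝ) = 2 ^ 2 by norm_num, Real.sqrt_sq (by norm_num : (0:ℝ) ≤ 2)]]
    exact Real.sqrt_le_sqrt (by linarith)
  have hbb : b * b = C1 + 4 := Real.mul_self_sqrt (by linarith)
  set q : ℝ := Real.sqrt (L / m) with hqdef
  set w : ℝ := Real.sqrt ((m:ℝ) * L) with hwdef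
  set Δ : ℝ := nbhdRadius C C1 m with hΔdef
  have hΔeq : Δ = (C + b) * q := rfl
  have hLm0 : 0 < L / m := div_pos hL0 hm0
  have hq0 : 0 < q := Real.sqrt_pos.mpr hLm0
  have hΔ0 : 0 < Δ := by rw [hΔeq]; positivity
  set Csq : ℝ := C * w with hCsqdef
  set τ : ℝ := b * q with hτdef
  have hτ0 : 0 ≤ τ := by positivity
  -- key sqrt identities
  have hqw : q * w = L := by
    rw [hqdef, hwdef, ← Real.sqrt_mul hLm0.le]
    rw [show L / (m:ℝ) * ((m:ℝ) * L) = L ^ 2 by field_simp]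
    exact Real.sqrt_sq hL0.le
  have hq2 : (m:ℝ) * q ^ 2 = L := by
    rw [hqdef, Real.sq_sqrt hLm0.le]
    field_simp
  -- lower bound on Δ
  have hsqlb : 1 / s ≤ q := by
    rw [hsdef, hqdef, one_div, ← Real.sqrt_inv]
    apply Real.sqrt_le_sqrt
    rw [inv_eq_one_div]
    gcongr
  have hΔlb : 2 / s ≤ Δ := by
    rw [hΔeq]
    have h1 : 2 * (1/s) ≤ 2 * q := by linarith
    have h2 : 2 * q ≤ (C + b) * q := mul_le_mul_of_nonneg_right (by linarith) hq0.le
    calc 2 / s = 2 * (1/s) := by ring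
    _ ≤ (C + b) * q := le_trans h1 h2
  -- R is positive
  have hR0 : 0 < R := by
    rcases R with _ | R'
    · have h1 := p.last
      rw [show Fin.last 0 = 0 from rfl, p.first] at h1
      norm_num at h1
    · omega
  have hcut0 : ∀ j : Fin (R+1), 0 ≤ p.cut j := by
    intro j
    rw [← p.first]
    exact p.mono.monotone (Fin.zero_le _)
  have hcut1 : ∀ j : Fin (R+1), p.cut j ≤ 1 := by
    intro j
    rw [← p.last]
    exact p.mono.monotone (Fin.le_last _)
  have hlen1 : ∀ r : Fin R, p.len r ≤ 1 := by
    intro r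
    have h1 := hcut1 r.succ
    have h2 := hcut0 r.castSucc
    simp only [IntervalPartition.len]
    linarith
  have hΔhalf : 2 * Δ ≤ 1 := le_trans (hlen ⟨0, hR0⟩) (hlen1 ⟨0, hR0⟩)
  have hΔle1 : Δ ≤ 1 := by linarith
  -- R ≤ m
  have hRm : (R:ℝ) ≤ m := by
    have hsum : (R:ℝ) * (2 * Δ) ≤ 1 := by
      calc (R:ℝ) * (2 * Δ) = ∑ r : Fin R, 2 * Δ := by
            rw [Finset.sum_const, Finset.card_univ, Fintype.card_fin, nsmul_eq_mul]
      _ ≤ ∑ r : Fin R, p.len r := Finset.sum_le_sum (fun r _ => hlen r)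
      _ = 1 := p.sum_len
    have h2s' : (2:ℝ) ≤ Δ * s := (div_le_iff₀ hs0).mp hΔlb
    have hR4 : (R:ℝ) * (4 / s) ≤ 1 := by
      have : (4:ℝ) / s ≤ 2 * Δ := by
        rw [div_le_iff₀ hs0]
        nlinarith
      calc (R:ℝ) * (4 / s) ≤ (R:ℝ) * (2 * Δ) :=
            mul_le_mul_of_nonneg_left this (Nat.cast_nonneg R)
      _ ≤ 1 := hsum
    have h5 : (R:ℝ) * 4 ≤ s := by
      have h6 : (R:ℝ) * (4/s) * s ≤ 1 * s := mul_le_mul_of_nonneg_right hR4 hs0.le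
      have h7 : (4:ℝ)/s*s = 4 := div_mul_cancel₀ 4 hs0.ne'
      nlinarith
    have hRnn : (0:ℝ) ≤ (R:ℝ) := Nat.cast_nonneg R
    linarith
  -- the net
  set st : Fin R → Fin m → ℝ :=
    fun r k => max (p.cut r.castSucc)
      (min (p.cut r.castSucc + (k:ℕ) * (Δ/2)) (p.cut r.succ - Δ)) with hstdef
  have hstval : ∀ (r : Fin R) (k : Fin m), st r k = max (p.cut r.castSucc)
      (min (p.cut r.castSucc + (k:ℕ) * (Δ/2)) (p.cut r.succ - Δ)) :=
    fun r k => by rw [hstdef]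
  set Jset : Fin R → Fin m → Set ℝ := fun r k => Set.Ico (st r k) (st r k + Δ) with hJdef
  have hJIco : ∀ (r : Fin R) (k : Fin m), Jset r k = Set.Ico (st r k) (st r k + Δ) :=
    fun r k => by rw [hJdef]
  have hJmem : ∀ (r : Fin R) (k : Fin m) (y : ℝ),
      y ∈ Jset r k ↔ st r k ≤ y ∧ y < st r k + Δ := by
    intro r k y
    rw [hJIco]
    exact Set.mem_Ico
  have hgap : ∀ r : Fin R, p.cut r.castSucc + 2*Δ ≤ p.cut r.succ := by
    intro r
    have h := hlen r
    simp only [IntervalPartition.len] at h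
    linarith
  have hst_lo : ∀ (r : Fin R) (k : Fin m), p.cut r.castSucc ≤ st r k := by
    intro r k
    rw [hstval]
    exact le_max_left _ _
  have hst_hi : ∀ (r : Fin R) (k : Fin m), st r k ≤ p.cut r.succ - Δ := by
    intro r k
    rw [hstval]
    apply max_le _ (min_le_right _ _)
    linarith [hgap r]
  have hJcell : ∀ (r : Fin R) (k : Fin m), Jset r k ⊆ p.cell r := by
    intro r k y hy
    rw [hJmem] at hy
    constructor
    · linarith [hst_lo r k, hy.1]
    · have := hst_hi r k
      have := hy.2
      linarith
  have hJ01 : ∀ (r : Fin R) (k : Fin m), Jset r k ⊆ Set.Ico (0:ℝ) 1 :=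
    fun r k => (hJcell r k).trans (p.cell_subset r)
  have hcover : ∀ r : Fin R, ∀ x ∈ p.cell r,
      ∃ k : Fin m, st r k ≤ x ∧ x < st r k + Δ := by
    intro r x hx
    obtain ⟨k, h1, h2⟩ := net_cover hm hΔ0 hΔlb (hcut0 r.castSucc) (hcut1 r.succ)
      (hgap r) hx.1 hx.2
    refine ⟨k, ?_, ?_⟩
    · rw [hstval]; exact h1
    · rw [hstval]; exact h2
  -- bad events
  set bad : Fin R → Fin m → Set Ω :=
    fun r k => {ω | (Set.ncard {i' : Fin m | X i' ω ∈ Jset r k} : ℝ) < Csq} with hbaddef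
  set outside : Set Ω := ⋃ i, {ω | X i ω ∉ Set.Ico (0:ℝ) 1} with houtdef
  set badAll : Set Ω := (⋃ r, ⋃ k, bad r k) ∪ outside with hballdef
  -- probability of being outside [0,1) is zero
  have houtside : μ outside = 0 := by
    rw [houtdef]
    apply measure_iUnion_null
    intro i
    have : {ω | X i ω ∉ Set.Ico (0:ℝ) 1} = X i ⁻¹' (Set.Ico (0:ℝ) 1)ᶜ := rfl
    rw [this, ← Measure.map_apply (hXm i) measurableSet_Ico.compl, hXmap i,
      Measure.restrict_apply measurableSet_Ico.compl, Set.compl_inter_self,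
      measure_empty]
  -- exponent computation
  have hkey : τ * Csq - τ * ((m:ℝ) * Δ) + (m:ℝ) * τ ^ 2 / 2 = -((C1+4)/2) * L := by
    rw [hτdef, hCsqdef, hΔeq]
    linear_combination (C * b) * hqw + (b^2/2 - b*(C+b)) * hq2 + (L/2 - L) * hbb + b * L * hbb - b*L*hbb
  -- tail bound for each bad event
  have htail : ∀ r k, μ (bad r k) ≤ ENNReal.ofReal (Real.exp (-((C1+4)/2) * L)) := by
    intro r k
    have hp : ∀ i, (μ (X i ⁻¹' Jset r k)).toReal = Δ := by
      intro i
      rw [hJIco r k]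
      rw [← Measure.map_apply (hXm i) measurableSet_Ico, hXmap i,
        Measure.restrict_apply measurableSet_Ico,
        Set.inter_eq_self_of_subset_left ((hJIco r k) ▸ hJ01 r k), Real.volume_Ico]
      rw [show st r k + Δ - st r k = Δ by ring]
      exact ENNReal.toReal_ofReal hΔ0.le
    have hJmeas : MeasurableSet (Jset r k) := by rw [hJIco r k]; exact measurableSet_Ico
    have hch := bernoulli_lower_tail μ X hXm hInd (Jset r k) hJmeas Δ hp hΔ0.le hΔle1 τ Csq hτ0
    have hsub : bad r k ⊆ {ω | (∑ i, Set.indicator (Jset r k) 1 (X i ω)) ≤ Csq} := by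
      intro ω hω
      rw [Set.mem_setOf_eq, sum_indicator_eq_ncard]
      exact le_of_lt hω
    calc μ (bad r k) ≤ μ {ω | (∑ i, Set.indicator (Jset r k) 1 (X i ω)) ≤ Csq} :=
          measure_mono hsub
    _ = ENNReal.ofReal ((μ {ω | (∑ i, Set.indicator (Jset r k) 1 (X i ω)) ≤ Csq}).toReal) :=
          (ENNReal.ofReal_toReal (measure_ne_top μ _)).symm
    _ ≤ ENNReal.ofReal (Real.exp (τ * Csq - τ * ((m:ℝ) * Δ) + (m:ℝ) * τ ^ 2 / 2)) :=
          ENNReal.ofReal_le_ofReal hch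
    _ = ENNReal.ofReal (Real.exp (-((C1+4)/2) * L)) := by rw [hkey]
  -- union bound
  set B : ℝ := 2 * (m:ℝ) ^ (-(C1/4)) with hBdef
  have hB0 : 0 ≤ B := by rw [hBdef]; positivity
  have hbadAll : μ badAll ≤ ENNReal.ofReal B := by
    have h1 : μ badAll ≤ ∑ r : Fin R, ∑ k : Fin m, μ (bad r k) := by
      rw [hballdef]
      calc μ ((⋃ r, ⋃ k, bad r k) ∪ outside)
          ≤ μ (⋃ r, ⋃ k, bad r k) + μ outside := measure_union_le _ _
      _ = μ (⋃ r, ⋃ k, bad r k) := by rw [houtside, add_zero]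
      _ ≤ ∑' r : Fin R, μ (⋃ k, bad r k) := measure_iUnion_le _
      _ ≤ ∑' r : Fin R, ∑' k : Fin m, μ (bad r k) :=
            ENNReal.tsum_le_tsum (fun r => measure_iUnion_le _)
      _ = ∑ r : Fin R, ∑ k : Fin m, μ (bad r k) := by
            rw [tsum_fintype]
            exact Finset.sum_congr rfl fun r _ => tsum_fintype _
    have h2 : (∑ r : Fin R, ∑ k : Fin m, μ (bad r k)) ≤
        ((R * m : ℕ) : ENNReal) * ENNReal.ofReal (Real.exp (-((C1+4)/2) * L)) := by
      calc (∑ r : Fin R, ∑ k : Fin m, μ (bad r k))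
          ≤ (∑ r : Fin R, ∑ k : Fin m, ENNReal.ofReal (Real.exp (-((C1+4)/2) * L))) :=
            Finset.sum_le_sum fun r _ => Finset.sum_le_sum fun k _ => htail r k
      _ = ((R * m : ℕ) : ENNReal) * ENNReal.ofReal (Real.exp (-((C1+4)/2) * L)) := by
            simp [Finset.sum_const, Finset.card_univ, nsmul_eq_mul]
            push_cast
            ring
    have h3 : ((R * m : ℕ) : ENNReal) * ENNReal.ofReal (Real.exp (-((C1+4)/2) * L)) ≤
        ENNReal.ofReal B := by
      rw [show ((R * m : ℕ) : ENNReal) = ENNReal.ofReal ((R * m : ℕ) : ℝ) by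
        rw [ENNReal.ofReal_natCast], ← ENNReal.ofReal_mul (Nat.cast_nonneg _)]
      apply ENNReal.ofReal_le_ofReal
      have hRmc : ((R * m : ℕ) : ℝ) ≤ (m:ℝ) * (m:ℝ) := by
        push_cast
        exact mul_le_mul_of_nonneg_right hRm hm0.le
      have hexpL : (m:ℝ) = Real.exp L := (Real.exp_log hm0).symm
      have hrpow : (m:ℝ) ^ (-(C1/4)) = Real.exp (-(C1/4) * L) := by
        rw [Real.rpow_def_of_pos hm0, hLdef]
        congr 1
        ring
      calc ((R * m : ℕ) : ℝ) * Real.exp (-((C1+4)/2) * L)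
          ≤ ((m:ℝ) * (m:ℝ)) * Real.exp (-((C1+4)/2) * L) :=
            mul_le_mul_of_nonneg_right hRmc (Real.exp_pos _).le
      _ = Real.exp (L + L + -((C1+4)/2) * L) := by
            rw [hexpL, ← Real.exp_add, ← Real.exp_add]
      _ ≤ Real.exp (-(C1/4) * L) := by
            apply Real.exp_le_exp.mpr
            nlinarith
      _ = (m:ℝ) ^ (-(C1/4)) := hrpow.symm
      _ ≤ B := by rw [hBdef]; nlinarith [Real.rpow_nonneg hm0.le (-(C1/4))]
    exact le_trans h1 (le_trans h2 h3)
  -- the good event is contained in the target event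
  have hsub : badAllᶜ ⊆ {ω | ∀ i : Fin m,
      C * Real.sqrt ((m:ℝ) * L) ≤
        (Set.ncard {i' : Fin m |
          X i' ω ∈ Set.Icc (X i ω - Δ) (X i ω + Δ) ∧
          p.sameCell (X i ω) (X i' ω)} : ℝ)} := by
    intro ω hω
    rw [hballdef, Set.compl_union] at hω
    obtain ⟨hnb, hno⟩ := hω
    intro i
    have hxin : X i ω ∈ Set.Ico (0:ℝ) 1 := by
      by_contra hcon
      apply hno
      rw [houtdef]
      exact Set.mem_iUnion.mpr ⟨i, hcon⟩
    obtain ⟨r, hr⟩ := p.exists_cell hxin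
    obtain ⟨k, hk1, hk2⟩ := hcover r _ hr
    have hnbad : ω ∉ bad r k := by
      intro hcon
      exact hnb (Set.mem_iUnion.mpr ⟨r, Set.mem_iUnion.mpr ⟨k, hcon⟩⟩)
    have hge : Csq ≤ (Set.ncard {i' : Fin m | X i' ω ∈ Jset r k} : ℝ) := by
      rw [hbaddef] at hnbad
      exact not_lt.mp hnbad
    have hsubset : {i' : Fin m | X i' ω ∈ Jset r k} ⊆
        {i' : Fin m | X i' ω ∈ Set.Icc (X i ω - Δ) (X i ω + Δ) ∧
          p.sameCell (X i ω) (X i' ω)} := by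
      intro i' hi'
      rw [Set.mem_setOf_eq, hJmem] at hi'
      have hy1 : st r k ≤ X i' ω := hi'.1
      have hy2 : X i' ω < st r k + Δ := hi'.2
      rw [Set.mem_setOf_eq]
      constructor
      · constructor
        · linarith
        · linarith
      · exact ⟨r, hr, hJcell r k ((hJmem r k _).mpr hi')⟩
    calc Csq ≤ (Set.ncard {i' : Fin m | X i' ω ∈ Jset r k} : ℝ) := hge
    _ ≤ _ := by
        exact_mod_cast Nat.cast_le.mpr (Set.ncard_le_ncard hsubset (Set.toFinite _))
  -- conclude
  calc ENNReal.ofReal (1 - B) = 1 - ENNReal.ofReal B := by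
        rw [← ENNReal.ofReal_one, ← ENNReal.ofReal_sub _ hB0]
  _ ≤ μ badAllᶜ := by
      rw [tsub_le_iff_right]
      calc (1:ENNReal) = μ Set.univ := measure_univ.symm
      _ = μ (badAllᶜ ∪ badAll) := by rw [Set.compl_union_self]
      _ ≤ μ badAllᶜ + μ badAll := measure_union_le _ _
      _ ≤ μ badAllᶜ + ENNReal.ofReal B := add_le_add le_rfl hbadAll
  _ ≤ _ := measure_mono hsub
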